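/- Let k > 1 be an integer and let d_0, d_1, …, d_m be finite strings of positive integers (each ending in a digit ≥ 2) such that each continued fraction [d_j] is a k-reverse multiple, i.e., [d_j] = k·[reverse of d_j], and such that the strings satisfy the palindromic condition d_j = d_{m−j} for all 0 ≤ j ≤ m. Then the continued fraction of the concatenated string d_0 d_1 ⋯ d_m is also a k-reverse multiple: [d_0 d_1 ⋯ d_m] = k·[reverse of d_0 d_1 ⋯ d_m]. -/

import Mathlib

/-- Value of the finite simple continued fraction `[x₀; x₁, …, xₙ]`. -/
def cfv : List ℚ → ℚ
  | [] => 0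
  | [x] => x
  | x :: y :: t => x + 1 / cfv (y :: t)

/-- The continuant `K(x₀, …, xₙ)`: `K() = 1`, `K(x₀) = x₀`, and the usual
three-term recurrence. -/
def cont : List ℕ → ℕ
  | [] => 1
  | [x] => x
  | x :: y :: t => x * cont (y :: t) + cont t

/-- The digit string of `a`, as a list of rationals. -/
def digitsQ {N : ℕ} (a : Fin N → ℕ) : List ℚ := (List.ofFn a).map (fun x => (x : ℚ))

/-- `[a₀; a₁, …, aₙ]` (canonical: positive digits, last digit ≥ 2) is a
`(σ,k)`-permutiple: it equals `k` times the continued fraction of the permuted digits. -/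
def IsPermutiple {n : ℕ} (a : Fin (n+1) → ℕ) (σ : Equiv.Perm (Fin (n+1))) (k : ℕ) : Prop :=
  (∀ j, 0 < a j) ∧ 2 ≤ a (Fin.last n) ∧ 1 < k ∧
    cfv (digitsQ a) = k * cfv (digitsQ (a ∘ σ))

/-- A `(σ,k)`-permutiple is continuant-preserving if
`K(a₀,…,aₙ) = K(a_{σ(0)},…,a_{σ(n)})`. -/
def ContinuantPreserving {n : ℕ} (a : Fin (n+1) → ℕ) (σ : Equiv.Perm (Fin (n+1))) : Prop :=
  cont (List.ofFn a) = cont (List.ofFn (a ∘ σ))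

/-- A `(σ,k)`-permutiple is perfect if `a_j = k·a_{σ(j)}` for even `j` and
`a_{σ(j)} = k·a_j` for odd `j`. -/
def IsPerfect {n : ℕ} (a : Fin (n+1) → ℕ) (σ : Equiv.Perm (Fin (n+1))) (k : ℕ) : Prop :=
  ∀ j : Fin (n+1), (Even (j : ℕ) → a j = k * a (σ j)) ∧ (Odd (j : ℕ) → a (σ j) = k * a j)

/-- A `(σ,k)`-permutiple is symmetric if `a_j·a_{n−j} = a_{σ(j)}·a_{σ(n−j)}` for all `j`. -/
def IsSymmetric {n : ℕ} (a : Fin (n+1) → ℕ) (σ : Equiv.Perm (Fin (n+1))) : Prop :=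
  ∀ j : Fin (n+1), a j * a j.rev = a (σ j) * a (σ j.rev)

/-- A Landess permutiple: a continuant-preserving `(σ,k)`-permutiple with
`q_{n−1} = q'_{n−1}` and `p_{n−1} = k·p'_{n−1}`. -/
def IsLandess {n : ℕ} (a : Fin (n+1) → ℕ) (σ : Equiv.Perm (Fin (n+1))) (k : ℕ) : Prop :=
  IsPermutiple a σ k ∧ ContinuantPreserving a σ ∧
    cont ((List.ofFn a).tail.dropLast) = cont ((List.ofFn (a ∘ σ)).tail.dropLast) ∧
    cont ((List.ofFn a).dropLast) = k * cont ((List.ofFn (a ∘ σ)).dropLast)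

namespace Stmt18Aux
open Matrix

def Mf (x : ℕ) : Matrix (Fin 2) (Fin 2) ℚ := !![(x:ℚ), 1; 1, 0]
def Ml (s : List ℕ) : Matrix (Fin 2) (Fin 2) ℚ := (s.map Mf).prod

lemma Ml_cons (x : ℕ) (s : List ℕ) : Ml (x :: s) = Mf x * Ml s := by simp [Ml]
lemma Ml_singleton (x : ℕ) : Ml [x] = Mf x := by simp [Ml]
lemma Ml_append (s t : List ℕ) : Ml (s ++ t) = Ml s * Ml t := by simp [Ml]

lemma Mf_transpose (x : ℕ) : (Mf x)ᵀ = Mf x := by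
  ext i j; fin_cases i <;> fin_cases j <;> simp [Mf]

lemma Ml_reverse (s : List ℕ) : Ml s.reverse = (Ml s)ᵀ := by
  induction s with
  | nil => simp [Ml, Matrix.transpose_one]
  | cons x t ih =>
      rw [List.reverse_cons, Ml_append, ih, Ml_singleton, Ml_cons,
        Matrix.transpose_mul, Mf_transpose]

lemma mapcoe (l : List ℕ) : List.map (fun x => (x:ℚ)) l = List.map (fun x : ℕ => (x:ℚ)) l := by
  induction l with
  | nil => rfl
  | cons a t ih => simpa using ih

lemma cfv_cons_cons (x y : ℚ) (t : List ℚ) : cfv (x :: y :: t) = x + 1 / cfv (y :: t) := rfl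

lemma key (s : List ℕ) (hne : s ≠ []) (hpos : ∀ x ∈ s, 0 < x) :
    0 < Ml s 0 0 ∧ 0 < Ml s 1 0 ∧ 0 < Ml s 0 1 ∧ 0 ≤ Ml s 1 1 ∧
      cfv (s.map (fun x : ℕ => (x:ℚ))) = Ml s 0 0 / Ml s 1 0 := by
  induction s with
  | nil => exact absurd rfl hne
  | cons x t ih =>
      match t with
      | [] =>
          have hx : (0:ℚ) < x := by exact_mod_cast hpos x (by simp)
          rw [Ml_singleton]
          simp [Mf, cfv, hx]
      | y :: u =>
          have hx : (0:ℚ) < x := by exact_mod_cast hpos x (by simp)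
          obtain ⟨h00, h10, h01, h11, hval⟩ :=
            ih (by simp) (fun z hz => hpos z (List.mem_cons_of_mem _ hz))
          set A := Ml (y :: u) with hA
          have e00 : Ml (x :: y :: u) 0 0 = x * A 0 0 + A 1 0 := by
            rw [Ml_cons]; simp [Matrix.mul_apply, Fin.sum_univ_two, Mf]; rfl
          have e10 : Ml (x :: y :: u) 1 0 = A 0 0 := by
            rw [Ml_cons]; simp [Matrix.mul_apply, Fin.sum_univ_two, Mf]; rfl
          have e01 : Ml (x :: y :: u) 0 1 = x * A 0 1 + A 1 1 := by
            rw [Ml_cons]; simp [Matrix.mul_apply, Fin.sum_univ_two, Mf]; rfl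
          have e11 : Ml (x :: y :: u) 1 1 = A 0 1 := by
            rw [Ml_cons]; simp [Matrix.mul_apply, Fin.sum_univ_two, Mf]; rfl
          refine ⟨?_, ?_, ?_, ?_, ?_⟩
          · rw [e00]; positivity
          · rw [e10]; exact h00
          · rw [e01]; positivity
          · rw [e11]; exact h01.le
          · rw [e00, e10, List.map_cons, List.map_cons, cfv_cons_cons, ← List.map_cons,
              hval]
            field_simp

def T (k : ℕ) : Matrix (Fin 2) (Fin 2) ℚ := !![1, 0; 0, (k:ℚ)]

lemma comm_T (k : ℕ) (A : Matrix (Fin 2) (Fin 2) ℚ) (h : A 0 1 = k * A 1 0) :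
    T k * A = Aᵀ * T k := by
  ext i j
  fin_cases i <;> fin_cases j <;>
    simp [T, Matrix.mul_apply, Fin.sum_univ_two, Matrix.transpose_apply, h] <;> ring

lemma prod_T (k : ℕ) (l : List (Matrix (Fin 2) (Fin 2) ℚ))
    (h : ∀ A ∈ l, T k * A = Aᵀ * T k) :
    T k * l.prod = (l.reverse.prod)ᵀ * T k := by
  induction l with
  | nil => simp
  | cons A t ih =>
      have hA := h A List.mem_cons_self
      have ht := ih (fun B hB => h B (List.mem_cons_of_mem _ hB))
      rw [List.prod_cons, ← mul_assoc, hA, mul_assoc, ht, List.reverse_cons,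
        List.prod_append, List.prod_singleton, Matrix.transpose_mul, mul_assoc]

lemma Ml_flatten (L : List (List ℕ)) : Ml L.flatten = (L.map Ml).prod := by
  induction L with
  | nil => rfl
  | cons s t ih => rw [List.flatten_cons, Ml_append, ih, List.map_cons, List.prod_cons]

lemma ofFn_reverse {n : ℕ} {α : Type*} (f : Fin n → α) :
    (List.ofFn f).reverse = List.ofFn (fun i => f i.rev) := by
  apply List.ext_getElem
  · simp
  · intro i h1 h2
    simp only [List.getElem_reverse, List.getElem_ofFn, List.length_ofFn] at *
    congr 1
    ext
    simp [Fin.rev]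
    omega

end Stmt18Aux


open Stmt18Aux Matrix

/-- A palindromic concatenation of `k`-reverse multiples is a `k`-reverse multiple:
if each digit string `d_j` (positive digits, last digit ≥ 2) satisfies
`[d_j] = k·[reverse d_j]` and `d_j = d_{m−j}` for all `j`, then the concatenated
string `d_0 d_1 ⋯ d_m` satisfies the same reverse-multiple equation. -/
theorem stmt18 (k m : ℕ) (hk : 1 < k) (d : Fin (m+1) → List ℕ)
    (hne : ∀ j, d j ≠ [])
    (hpos : ∀ j, ∀ x ∈ d j, 0 < x)
    (hlast : ∀ j (h : d j ≠ []), 2 ≤ (d j).getLast h)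
    (hrev : ∀ j, cfv ((d j).map (fun x => (x : ℚ))) =
      k * cfv ((d j).reverse.map (fun x => (x : ℚ))))
    (hpal : ∀ j : Fin (m+1), d j = d (j.rev)) :
    cfv ((List.ofFn d).flatten.map (fun x => (x : ℚ))) =
      k * cfv ((List.ofFn d).flatten.reverse.map (fun x => (x : ℚ))) := by
  have hkQ : (0:ℚ) < k := by exact_mod_cast Nat.zero_lt_of_lt hk
  -- the reverse-multiple condition in matrix form
  have cond : ∀ j, Ml (d j) 0 1 = k * Ml (d j) 1 0 := by
    intro j
    obtain ⟨h00, h10, h01, h11, hval⟩ := key (d j) (hne j) (hpos j)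
    obtain ⟨r00, r10, r01, r11, rval⟩ := key (d j).reverse
      (by simp [hne j]) (fun x hx => hpos j x (List.mem_reverse.mp hx))
    rw [Ml_reverse] at rval r00 r10
    simp only [Matrix.transpose_apply] at rval r00 r10
    have eq := hrev j
    rw [mapcoe, mapcoe, hval, rval] at eq
    have h00' := h00.ne'
    have h10' := h10.ne'
    have h01' := h01.ne'
    field_simp at eq
    apply mul_left_cancel₀ h00'
    linear_combination (Ml (d j) 0 0) * eq
  set F := (List.ofFn d).flatten with hF
  have hFne : F ≠ [] := by
    rw [hF, List.ofFn_succ, List.flatten_cons]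
    simp only [ne_eq, List.append_eq_nil_iff, not_and]
    intro h; exact absurd h (hne 0)
  have hFpos : ∀ x ∈ F, 0 < x := by
    intro x hx
    rw [hF, List.mem_flatten] at hx
    obtain ⟨l, hl, hxl⟩ := hx
    obtain ⟨j, rfl⟩ := List.mem_ofFn.mp hl
    exact hpos j x hxl
  -- palindromicity of the matrix list
  have lrev : ((List.ofFn d).map Ml).reverse = (List.ofFn d).map Ml := by
    rw [List.map_ofFn, ofFn_reverse]
    congr 1
    funext i
    simp only [Function.comp_apply]
    rw [← hpal i]
  -- the commutation identity for the product
  have hcomm : T k * Ml F = (Ml F)ᵀ * T k := by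
    rw [hF, Ml_flatten]
    have := prod_T k ((List.ofFn d).map Ml) ?_
    · rw [lrev] at this; exact this
    · intro A hA
      rw [List.mem_map] at hA
      obtain ⟨s, hs, rfl⟩ := hA
      obtain ⟨j, rfl⟩ := List.mem_ofFn.mp hs
      exact comm_T k _ (cond j)
  -- extract the (0,1) entry
  have hP : Ml F 0 1 = k * Ml F 1 0 := by
    have h01 := congrFun (congrFun hcomm 0) 1
    simpa [T, Matrix.mul_apply, Fin.sum_univ_two, Matrix.transpose_apply, mul_comm]
      using h01
  obtain ⟨p00, p10, p01, p11, pval⟩ := key F hFne hFpos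
  obtain ⟨q00, q10, q01, q11, qval⟩ := key F.reverse
    (by simp [hFne]) (fun x hx => hFpos x (List.mem_reverse.mp hx))
  rw [Ml_reverse] at qval
  simp only [Matrix.transpose_apply] at qval
  rw [mapcoe, mapcoe, pval, qval, hP]
  have hk' : (k:ℚ) ≠ 0 := hkQ.ne'
  have hp10 : Ml F 1 0 ≠ 0 := p10.ne'
  field_simp
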